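/- Let q be an odd prime power and let a, b be elements of the algebraic closure of F_q with a^{q+1} = b^{q+1} = −1, a^{(q+1)/2} ≠ b^{(q+1)/2}, and ab ≠ 1. Let A be the set of roots of x^{q^3} + a x^{q^2} − x^q − a x and B the set of roots of x^{q^3} + b x^{q^2} − x^q − b x. Then A and B are F_q-subspaces of size q^3 and |A^{-1} ∩ B| = 2q^2 − 2. -/

import Mathlib

open Polynomial

lemma card_setOf_root {K : Type*} [Field K] [IsAlgClosed K] (g : K[X])
    (hsep : g.Separable) (h0 : g ≠ 0) :
    Nat.card {x : K | g.eval x = 0} = g.natDegree := by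
  have : {x : K | g.eval x = 0} = g.rootSet K := by
    ext x
    simp [Polynomial.mem_rootSet', Polynomial.map_id, h0]
  rw [this, Nat.card_eq_fintype_card]
  exact Polynomial.card_rootSet_eq_natDegree hsep (IsAlgClosed.splits_domain g)

lemma card_setOf_pow_eq {K : Type*} [Field K] [IsAlgClosed K] (n : ℕ) (c : K)
    (hn : (n : K) ≠ 0) (hc : c ≠ 0) :
    {x : K | x ^ n = c}.ncard = n ∧ {x : K | x ^ n = c}.Finite := by
  have hn0 : n ≠ 0 := by rintro rfl; simp at hn
  have hsep : (X ^ n - C c : K[X]).Separable := separable_X_pow_sub_C c hn hc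
  have hne : (X ^ n - C c : K[X]) ≠ 0 := by
    intro h
    have := congrArg natDegree h
    rw [natDegree_X_pow_sub_C, natDegree_zero] at this
    exact hn0 this
  have hset : {x : K | x ^ n = c} = {x : K | (X ^ n - C c : K[X]).eval x = 0} := by
    ext x; simp [sub_eq_zero]
  have hcard := card_setOf_root _ hsep hne
  rw [natDegree_X_pow_sub_C] at hcard
  constructor
  · rw [hset, ← Nat.card_coe_set_eq, hcard]
  · rw [hset]; exact (X ^ n - C c : K[X]).finite_setOf_isRoot hne

lemma cardA_aux (K : Type*) [Field K] [IsAlgClosed K] (q : ℕ) (hq3 : 3 ≤ q)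
    (hqK : (q : K) = 0) (a : K) (ha0 : a ≠ 0) :
    Nat.card {x : K | x ^ q ^ 3 + a * x ^ q ^ 2 - x ^ q - a * x = 0} = q ^ 3 := by
  set g : K[X] := X ^ q ^ 3 + C a * X ^ q ^ 2 - X ^ q - C a * X with hg
  have hq32 : q ^ 2 < q ^ 3 := Nat.pow_lt_pow_right (by omega) (by omega)
  have hq12 : q < q ^ 2 := by nlinarith
  have hdeg : g.natDegree = q ^ 3 := by
    rw [hg]
    compute_degree!
    all_goals try omega
    rw [if_neg (by nlinarith : ¬ q^3 = q^2), if_neg (by nlinarith : ¬ q^3 = q),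
      if_neg (by omega : ¬ q = 1)]
    simp
  have hgne : g ≠ 0 := fun h => by simp [h] at hdeg; omega
  have hder : derivative g = C (-a) := by
    rw [hg]
    simp only [derivative_sub, derivative_add, derivative_mul, derivative_C,
      derivative_X_pow, derivative_X]
    simp [Nat.cast_pow, hqK]
  have hsep : g.Separable := by
    rw [Polynomial.Separable, hder]
    exact ⟨0, C (-a)⁻¹, by
      rw [← C_mul, inv_mul_cancel₀ (by simpa using ha0)]; simp⟩
  have hcard := card_setOf_root g hsep hgne
  have hsetEq : {x : K | x ^ q ^ 3 + a * x ^ q ^ 2 - x ^ q - a * x = 0}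
      = {x : K | g.eval x = 0} := by
    ext x; simp [hg]
  rw [hsetEq, hcard, hdeg]

lemma slice_count (K : Type*) [Field K] [IsAlgClosed K] (q : ℕ) (hq3 : 3 ≤ q) (hodd : Odd q)
    (hqK : (q : K) = 0) (hfrob : ∀ x y : K, (x + y) ^ q = x ^ q + y ^ q)
    (h2 : (2 : K) ≠ 0)
    (a b : K) (ha : a ^ (q + 1) = -1) (hb : b ^ (q + 1) = -1)
    (hab2 : a ^ ((q + 1) / 2) ≠ b ^ ((q + 1) / 2)) (hab : a * b ≠ 1)
    (y : K) (hy : y ^ (q - 1) = -a) :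
    {r : K | r ^ q ^ 2 = r ∧ (r ^ 2 - y ^ 2) ^ (q - 1) = a * b⁻¹}.ncard = q + 1 := by
  classical
  obtain ⟨l, hl⟩ := hodd
  have hq1 : q - 1 + 1 = q := by omega
  have hq1' : q - 1 ≠ 0 := by omega
  have hev1 : Even (q - 1) := ⟨l, by omega⟩
  have hev2 : Even (q + 1) := ⟨l + 1, by omega⟩
  have hoddq : Odd q := ⟨l, hl⟩
  have hoddq2 : Odd (q ^ 2) := hoddq.pow
  have hq2div : (q + 1) / 2 * 2 = q + 1 := Nat.div_mul_cancel hev2.two_dvd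
  have hexp : ∀ (x c : K), x ^ (q - 1) = c → x ^ q = c * x := by
    intro x c h; rw [← hq1, pow_succ, h]
  have hcancel : ∀ (x c : K), x ≠ 0 → x ^ q = c * x → x ^ (q - 1) = c := by
    intro x c hx h
    have h' : x ^ (q - 1) * x = c * x := by rw [← pow_succ, hq1, h]
    exact mul_right_cancel₀ hx h'
  have hpows2 : ∀ x : K, x ^ q ^ 2 = (x ^ q) ^ q := by
    intro x; rw [← pow_mul, sq]
  have a0 : a ≠ 0 := by
    intro h; rw [h, zero_pow (by omega : q + 1 ≠ 0)] at ha
    exact one_ne_zero (by linear_combination ha)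
  have b0 : b ≠ 0 := by
    intro h; rw [h, zero_pow (by omega : q + 1 ≠ 0)] at hb
    exact one_ne_zero (by linear_combination hb)
  have haq : a ^ q * a = -1 := by rw [← pow_succ]; exact ha
  have haqi : a ^ q = -a⁻¹ := by
    refine mul_right_cancel₀ a0 ?_; rw [haq]; field_simp
  have hm1 : (-1 : K) ≠ 1 := fun h => h2 (by linear_combination -h)
  set e := a * b⁻¹ with hedef
  have he0 : e ≠ 0 := mul_ne_zero a0 (inv_ne_zero b0)
  have hu : (a ^ ((q + 1) / 2)) ^ 2 = -1 := by rw [← pow_mul, hq2div]; exact ha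
  have hv : (b ^ ((q + 1) / 2)) ^ 2 = -1 := by rw [← pow_mul, hq2div]; exact hb
  have hv0 : b ^ ((q + 1) / 2) ≠ 0 := pow_ne_zero _ b0
  have huv : a ^ ((q + 1) / 2) = -(b ^ ((q + 1) / 2)) := by
    have hfac : (a ^ ((q + 1) / 2) - b ^ ((q + 1) / 2)) *
        (a ^ ((q + 1) / 2) + b ^ ((q + 1) / 2)) = 0 := by linear_combination hu - hv
    rcases mul_eq_zero.mp hfac with h | h
    · exact absurd (sub_eq_zero.mp h) hab2
    · exact eq_neg_of_add_eq_zero_left h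
  have he2 : e ^ ((q + 1) / 2) = -1 := by
    rw [hedef, mul_pow, inv_pow, huv]
    field_simp [hv0]
  have he1 : e ^ (q + 1) = 1 := by rw [← hq2div, pow_mul, he2]; ring
  have heq : e ^ q * e = 1 := by rw [← pow_succ]; exact he1
  have heqi : e ^ q = e⁻¹ := by
    refine mul_right_cancel₀ he0 ?_; rw [heq]; field_simp
  have ha2e : a ^ 2 ≠ e := by
    intro h
    apply hab
    have h' : a ^ 2 * b = a := by rw [h, hedef]; field_simp
    have h'' : a * (a * b) = a * 1 := by linear_combination h'
    exact mul_left_cancel₀ a0 h''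
  have hy0 : y ≠ 0 := by
    intro h; rw [h, zero_pow hq1'] at hy
    exact a0 (by linear_combination hy)
  have hyq : y ^ q = -(a * y) := by rw [hexp y (-a) hy]; ring
  set d := (a ^ 2 - e) * y ^ 2 with hddef
  have hd0 : d ≠ 0 := mul_ne_zero (sub_ne_zero.mpr ha2e) (pow_ne_zero _ hy0)
  have hsub : ∀ u v : K, (u - v) ^ q = u ^ q - v ^ q := by
    intro u v
    have h := hfrob (u - v) v
    rw [sub_add_cancel] at h
    linear_combination -h
  have hy2q : (y ^ 2) ^ q = a ^ 2 * y ^ 2 := by rw [pow_right_comm, hyq]; ring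
  have hyq2 : y ^ q ^ 2 = -y := by
    calc y ^ q ^ 2 = (y ^ q) ^ q := hpows2 y
      _ = -((a * y) ^ q) := by rw [hyq, hoddq.neg_pow]
      _ = -(a ^ q * (-(a * y))) := by rw [mul_pow, hyq]
      _ = (a ^ q * a) * y := by ring
      _ = -y := by rw [haq]; ring
  -- facts about (q+1)-th roots of unity
  have hdq : d ^ q = -(d / e) := by
    have h1 : d ^ q = ((a ^ q) ^ 2 - e ^ q) * (y ^ q) ^ 2 := by
      rw [hddef, mul_pow, hsub, pow_right_comm a, pow_right_comm y]
    rw [h1, haqi, heqi, hyq, hddef]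
    field_simp
    ring
  clear_value e d
  have hmfacts : ∀ m : K, m ^ (q + 1) = 1 → m ≠ 0 ∧ m ^ q = m⁻¹ ∧ m ^ 2 - e ≠ 0 := by
    intro m hm
    have hm0 : m ≠ 0 := by
      intro h; rw [h, zero_pow (by omega : q + 1 ≠ 0)] at hm; exact one_ne_zero hm.symm
    have hmq : m ^ q = m⁻¹ := by
      refine mul_right_cancel₀ hm0 ?_; rw [← pow_succ, hm]; field_simp
    refine ⟨hm0, hmq, ?_⟩
    intro hcon
    have hme : m ^ 2 = e := by linear_combination hcon
    have hee : e ^ ((q + 1) / 2) = 1 := by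
      rw [← hme, ← pow_mul, mul_comm 2 ((q + 1) / 2), hq2div]
      exact hm
    rw [he2] at hee; exact hm1 hee
  have hXpow : ∀ m : K, m ^ (q + 1) = 1 →
      (d / (m ^ 2 - e)) ^ q = m ^ 2 * (d / (m ^ 2 - e)) := by
    intro m hm
    obtain ⟨hm0, hmq, hw0⟩ := hmfacts m hm
    have hwq : (m ^ 2 - e) ^ q = -((m ^ 2 - e) / (e * m ^ 2)) := by
      rw [hsub, pow_right_comm, hmq, heqi]
      field_simp [hm0, he0]
      try ring
      try simp
    rw [div_pow, hdq, hwq, neg_div_neg_eq, div_div_eq_mul_div]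
    field_simp [hw0, hm0, he0]
  have hXpow' : ∀ m : K, m ^ (q + 1) = 1 → (d / (m ^ 2 - e)) ^ (q - 1) = m ^ 2 := fun m hm =>
    hcancel _ _ (div_ne_zero hd0 (hmfacts m hm).2.2) (hXpow m hm)
  have hdichot : ∀ m : K, m ^ (q + 1) = 1 → ∀ r : K, r ^ 2 = d / (m ^ 2 - e) →
      r ≠ 0 ∧ (r ^ (q - 1) = m ∨ r ^ (q - 1) = -m) := by
    intro m hm r hr
    have hX0 : d / (m ^ 2 - e) ≠ 0 := div_ne_zero hd0 (hmfacts m hm).2.2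
    have hr0 : r ≠ 0 := by
      intro h; rw [h, (by ring : (0 : K) ^ 2 = 0)] at hr; exact hX0 hr.symm
    have hsq : (r ^ (q - 1)) ^ 2 = m ^ 2 := by rw [pow_right_comm, hr, hXpow' m hm]
    have hfac : (r ^ (q - 1) - m) * (r ^ (q - 1) + m) = 0 := by linear_combination hsq
    rcases mul_eq_zero.mp hfac with h | h
    · exact ⟨hr0, Or.inl (by linear_combination h)⟩
    · exact ⟨hr0, Or.inr (by linear_combination h)⟩
  set Good : Set K :=
    {m : K | m ^ (q + 1) = 1 ∧ ∃ r : K, r ^ 2 = d / (m ^ 2 - e) ∧ r ^ (q - 1) = m} with hGdef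
  have hGneg : ∀ m : K, m ^ (q + 1) = 1 → (m ∈ Good ↔ -m ∉ Good) := by
    intro m hm
    have hm0 := (hmfacts m hm).1
    have hmm : m ≠ -m := by
      intro h
      have h2m : (2 : K) * m = 0 := by linear_combination h
      rcases mul_eq_zero.mp h2m with h' | h'
      exacts [h2 h', hm0 h']
    have hnm : (-m) ^ (q + 1) = 1 := by rw [hev2.neg_pow]; exact hm
    have hXeq : d / ((-m) ^ 2 - e) = d / (m ^ 2 - e) := by rw [neg_sq]
    constructor
    · rintro ⟨_, r, hr2, hrm⟩ ⟨_, r', hr2', hrm'⟩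
      rw [hXeq] at hr2'
      have hrr : r' = r ∨ r' = -r := by
        have hf : (r' - r) * (r' + r) = 0 := by linear_combination hr2' - hr2
        rcases mul_eq_zero.mp hf with h | h
        exacts [Or.inl (by linear_combination h), Or.inr (by linear_combination h)]
      have h3 : r' ^ (q - 1) = m := by
        rcases hrr with h | h
        · rw [h, hrm]
        · rw [h, hev1.neg_pow, hrm]
      exact hmm (h3.symm.trans hrm')
    · intro hnot
      obtain ⟨r0, hr0⟩ := IsAlgClosed.exists_pow_nat_eq (d / (m ^ 2 - e)) (by norm_num : 0 < 2)
      rcases (hdichot m hm r0 hr0).2 with h | h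
      · exact ⟨hm, r0, hr0, h⟩
      · exact absurd ⟨hnm, r0, by rw [hXeq]; exact hr0, h⟩ hnot
  have hμ := card_setOf_pow_eq (K := K) (q + 1) 1
    (by push_cast [hqK]; simp) one_ne_zero
  have hμcard : {m : K | m ^ (q + 1) = 1}.ncard = q + 1 := hμ.1
  have hμfin : {m : K | m ^ (q + 1) = 1}.Finite := hμ.2
  have hGsub : Good ⊆ {m : K | m ^ (q + 1) = 1} := fun m hm => hm.1
  have hGfin : Good.Finite := hμfin.subset hGsub
  have hsplit : {m : K | m ^ (q + 1) = 1} = Good ∪ (Neg.neg '' Good) := by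
    ext m
    simp only [Set.mem_union, Set.mem_image, Set.mem_setOf_eq]
    constructor
    · intro hm
      by_cases hG : m ∈ Good
      · exact Or.inl hG
      · right
        refine ⟨-m, ?_, neg_neg m⟩
        have hnm : (-m) ^ (q + 1) = 1 := by rw [hev2.neg_pow]; exact hm
        have hiff := hGneg (-m) hnm
        rw [neg_neg] at hiff
        exact hiff.mpr hG
    · intro h
      rcases h with hG | ⟨m', hm', rfl⟩
      · exact hG.1
      · rw [hev2.neg_pow]; exact hm'.1
  have hdisj : Disjoint Good (Neg.neg '' Good) := by
    rw [Set.disjoint_left]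
    rintro m hmG ⟨m', hm'G, rfl⟩
    have h1 := (hGneg (-m') (by rw [hev2.neg_pow]; exact hm'G.1)).mp hmG
    rw [neg_neg] at h1
    exact h1 hm'G
  have hcard2 : Good.ncard + Good.ncard = q + 1 := by
    have himg : (Neg.neg '' Good).ncard = Good.ncard :=
      Set.ncard_image_of_injective Good neg_injective
    rw [← hμcard, hsplit, Set.ncard_union_eq hdisj hGfin (hGfin.image _), himg]
  -- rewrite the slice
  have hsliceeq : {r : K | r ^ q ^ 2 = r ∧ (r ^ 2 - y ^ 2) ^ (q - 1) = e}
      = {r : K | r ^ q ^ 2 = r ∧ (r ^ 2) ^ q = e * r ^ 2 + d} := by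
    ext r
    simp only [Set.mem_setOf_eq, and_congr_right_iff]
    intro hr
    constructor
    · intro h
      have hw0 : r ^ 2 - y ^ 2 ≠ 0 := by
        intro hw; rw [hw, zero_pow hq1'] at h; exact he0 h.symm
      have h' := hexp _ _ h
      rw [hsub, hy2q] at h'
      rw [hddef]
      linear_combination h'
    · intro h
      have hw0 : r ^ 2 - y ^ 2 ≠ 0 := by
        intro hw
        have hry : r = y ∨ r = -y := by
          have hf : (r - y) * (r + y) = 0 := by linear_combination hw
          rcases mul_eq_zero.mp hf with h' | h'
          exacts [Or.inl (by linear_combination h'), Or.inr (by linear_combination h')]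
        have hyy : -y = y := by
          rcases hry with h' | h'
          · rw [h'] at hr; rw [← hyq2, hr]
          · rw [h'] at hr
            rw [hoddq2.neg_pow, hyq2] at hr
            linear_combination -hr
        have h2y : (2 : K) * y = 0 := by linear_combination -hyy
        rcases mul_eq_zero.mp h2y with h' | h'
        exacts [h2 h', hy0 h']
      have hwq : (r ^ 2 - y ^ 2) ^ q = e * (r ^ 2 - y ^ 2) := by
        rw [hsub, hy2q]
        rw [hddef] at h
        linear_combination h
      exact hcancel _ _ hw0 hwq
  rw [hsliceeq]
  -- finiteness
  have hFq2fin : {x : K | x ^ q ^ 2 = x}.Finite := by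
    have hne : (X ^ q ^ 2 - X : K[X]) ≠ 0 := by
      intro h
      have h' := congrArg natDegree (sub_eq_zero.mp h)
      rw [natDegree_X_pow, natDegree_X] at h'
      nlinarith
    have hset : {x : K | x ^ q ^ 2 = x} = {x : K | (X ^ q ^ 2 - X : K[X]).eval x = 0} := by
      ext x; simp [sub_eq_zero]
    rw [hset]
    exact (X ^ q ^ 2 - X : K[X]).finite_setOf_isRoot hne
  set SL := {r : K | r ^ q ^ 2 = r ∧ (r ^ 2) ^ q = e * r ^ 2 + d} with hSLdef
  have hSLfin : SL.Finite := hFq2fin.subset fun r hr => hr.1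
  have hq21 : q ^ 2 - 1 + 1 = q ^ 2 := by
    have h1 : 1 ≤ q ^ 2 := Nat.one_le_pow _ _ (by omega)
    omega
  have hnat1 : (q - 1) * (q + 1) = q ^ 2 - 1 := by
    have h1 : (q - 1) * (q + 1) = q * (q + 1) - (q + 1) := by rw [Nat.sub_mul, one_mul]
    have h2' : q * (q + 1) = q ^ 2 + q := by ring
    rw [h1, h2']
    generalize q ^ 2 = Q
    omega
  have hSLmem : ∀ r ∈ SL, r ≠ 0 ∧ r ^ (q - 1) ∈ Good ∧
      r ^ 2 = d / ((r ^ (q - 1)) ^ 2 - e) := by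
    intro r hr
    obtain ⟨hr1, hr2⟩ := hr
    have hr0 : r ≠ 0 := by
      intro h
      rw [h] at hr2
      have hz : ((0 : K) ^ 2) ^ q = 0 := by
        norm_num [zero_pow (show q ≠ 0 by omega)]
      rw [hz] at hr2
      exact hd0 (by linear_combination -hr2)
    have hm1' : (r ^ (q - 1)) ^ (q + 1) = 1 := by
      rw [← pow_mul, hnat1]
      refine mul_right_cancel₀ hr0 ?_
      rw [← pow_succ, hq21, hr1, one_mul]
    obtain ⟨hm0, hmq, hw0⟩ := hmfacts _ hm1'
    have hrq : r ^ q = r ^ (q - 1) * r := by rw [← pow_succ, hq1]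
    have hr2' : r ^ 2 * ((r ^ (q - 1)) ^ 2 - e) = d := by
      have h1 : (r ^ 2) ^ q = (r ^ q) ^ 2 := pow_right_comm r 2 q
      rw [h1, hrq] at hr2
      linear_combination hr2
    have hr2'' : r ^ 2 = d / ((r ^ (q - 1)) ^ 2 - e) := by
      rw [eq_div_iff hw0]; exact hr2'
    exact ⟨hr0, ⟨hm1', r, hr2'', rfl⟩, hr2''⟩
  have hmapsto : ∀ r ∈ hSLfin.toFinset, r ^ (q - 1) ∈ hGfin.toFinset := by
    intro r hr
    rw [Set.Finite.mem_toFinset] at hr ⊢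
    exact (hSLmem r hr).2.1
  have hcount : hSLfin.toFinset.card = ∑ m ∈ hGfin.toFinset, 2 := by
    rw [Finset.card_eq_sum_card_fiberwise hmapsto]
    apply Finset.sum_congr rfl
    intro m hmF
    have hmG : m ∈ Good := by rwa [Set.Finite.mem_toFinset] at hmF
    obtain ⟨hm1', r0, hr02, hr0m⟩ := hmG
    obtain ⟨hm0, hmq, hw0⟩ := hmfacts m hm1'
    have hr00 : r0 ≠ 0 := (hdichot m hm1' r0 hr02).1
    have hr0SL : r0 ∈ SL := by
      constructor
      · have h1 : r0 ^ (q ^ 2 - 1) = 1 := by rw [← hnat1, pow_mul, hr0m, hm1']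
        rw [← hq21, pow_succ, h1, one_mul]
      · have h1 : (r0 ^ 2) ^ q = (r0 ^ q) ^ 2 := pow_right_comm r0 2 q
        have hq0 : r0 ^ q = m * r0 := hexp r0 m hr0m
        rw [h1, hq0]
        have h3 : r0 ^ 2 * (m ^ 2 - e) = d := by
          rw [hr02]; field_simp
        linear_combination h3
    have hnr0SL : -r0 ∈ SL := by
      constructor
      · rw [hoddq2.neg_pow, hr0SL.1]
      · rw [(show (-r0) ^ 2 = r0 ^ 2 by ring)]
        exact hr0SL.2
    have hr0ne : r0 ≠ -r0 := by
      intro h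
      have h2y : (2 : K) * r0 = 0 := by linear_combination h
      rcases mul_eq_zero.mp h2y with h' | h'
      exacts [h2 h', hr00 h']
    have hfilter : hSLfin.toFinset.filter (fun r => r ^ (q - 1) = m) = {r0, -r0} := by
      ext r
      simp only [Finset.mem_filter, Set.Finite.mem_toFinset, Finset.mem_insert,
        Finset.mem_singleton]
      constructor
      · rintro ⟨hrSL, hrm⟩
        have h1 := (hSLmem r hrSL).2.2
        rw [hrm] at h1
        have hf : (r - r0) * (r + r0) = 0 := by linear_combination h1 - hr02
        rcases mul_eq_zero.mp hf with h' | h'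
        exacts [Or.inl (by linear_combination h'), Or.inr (by linear_combination h')]
      · rintro (rfl | rfl)
        · exact ⟨hr0SL, hr0m⟩
        · exact ⟨hnr0SL, by rw [hev1.neg_pow]; exact hr0m⟩
    rw [hfilter, Finset.card_insert_of_notMem (by simpa using hr0ne), Finset.card_singleton]
  have hfinal : SL.ncard = 2 * Good.ncard := by
    rw [Set.ncard_eq_toFinset_card SL hSLfin, hcount, Finset.sum_const, smul_eq_mul,
      Set.ncard_eq_toFinset_card Good hGfin, mul_comm]
  rw [hfinal]
  omega

lemma inter_count (K : Type*) [Field K] [IsAlgClosed K] (q : ℕ) (hq3 : 3 ≤ q) (hodd : Odd q)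
    (hqK : (q : K) = 0) (hfrob : ∀ x y : K, (x + y) ^ q = x ^ q + y ^ q)
    (h2 : (2 : K) ≠ 0)
    (a b : K) (ha : a ^ (q + 1) = -1) (hb : b ^ (q + 1) = -1)
    (hab2 : a ^ ((q + 1) / 2) ≠ b ^ ((q + 1) / 2)) (hab : a * b ≠ 1) :
    Nat.card ((fun x => x⁻¹) '' ({x : K | x ^ q ^ 3 + a * x ^ q ^ 2 - x ^ q - a * x = 0} \ {0})
      ∩ {x : K | x ^ q ^ 3 + b * x ^ q ^ 2 - x ^ q - b * x = 0} : Set K) = 2 * q ^ 2 - 2 := by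
  classical
  obtain ⟨l, hl⟩ := hodd
  have hoddq : Odd q := ⟨l, hl⟩
  have hq1 : q - 1 + 1 = q := by omega
  have hq1' : q - 1 ≠ 0 := by omega
  have hev1 : Even (q - 1) := ⟨l, by omega⟩
  have hexp : ∀ (x c : K), x ^ (q - 1) = c → x ^ q = c * x := by
    intro x c h; rw [← hq1, pow_succ, h]
  have hcancel : ∀ (x c : K), x ≠ 0 → x ^ q = c * x → x ^ (q - 1) = c := by
    intro x c hx h
    have h' : x ^ (q - 1) * x = c * x := by rw [← pow_succ, hq1, h]
    exact mul_right_cancel₀ hx h'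
  have hpows2 : ∀ x : K, x ^ q ^ 2 = (x ^ q) ^ q := by
    intro x; rw [← pow_mul, sq]
  have hpows3 : ∀ x : K, x ^ q ^ 3 = (x ^ q ^ 2) ^ q := by
    intro x; rw [← pow_mul, pow_succ]
  have a0 : a ≠ 0 := by
    intro h; rw [h, zero_pow (by omega : q + 1 ≠ 0)] at ha
    exact one_ne_zero (by linear_combination ha)
  have b0 : b ≠ 0 := by
    intro h; rw [h, zero_pow (by omega : q + 1 ≠ 0)] at hb
    exact one_ne_zero (by linear_combination hb)
  have haq : a ^ q * a = -1 := by rw [← pow_succ]; exact ha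
  have hsub : ∀ u v : K, (u - v) ^ q = u ^ q - v ^ q := by
    intro u v
    have h := hfrob (u - v) v
    rw [sub_add_cancel] at h
    linear_combination -h
  have hsub2 : ∀ u v : K, (u - v) ^ q ^ 2 = u ^ q ^ 2 - v ^ q ^ 2 := by
    intro u v
    rw [hpows2, hsub, hsub, ← hpows2, ← hpows2]
  have hadd2 : ∀ u v : K, (u + v) ^ q ^ 2 = u ^ q ^ 2 + v ^ q ^ 2 := by
    intro u v
    rw [hpows2, hfrob, hfrob, ← hpows2, ← hpows2]
  have hyfact : ∀ y : K, y ^ (q - 1) = -a → y ≠ 0 ∧ y ^ q = -(a * y) ∧ y ^ q ^ 2 = -y := by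
    intro y hy
    have hy0 : y ≠ 0 := by
      intro h; rw [h, zero_pow hq1'] at hy
      exact a0 (by linear_combination hy)
    have hyq : y ^ q = -(a * y) := by rw [hexp y (-a) hy]; ring
    refine ⟨hy0, hyq, ?_⟩
    calc y ^ q ^ 2 = (y ^ q) ^ q := hpows2 y
      _ = -((a * y) ^ q) := by rw [hyq, hoddq.neg_pow]
      _ = -(a ^ q * (-(a * y))) := by rw [mul_pow, hyq]
      _ = (a ^ q * a) * y := by ring
      _ = -y := by rw [haq]; ring
  have hexpr : ∀ (c x : K), x ^ q ^ 3 + c * x ^ q ^ 2 - x ^ q - c * x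
      = (x ^ q ^ 2 - x) ^ q + c * (x ^ q ^ 2 - x) := by
    intro c x
    rw [hsub, ← hpows3]
    ring
  have hroot : ∀ (c x : K), c ≠ 0 → ((x ^ q ^ 2 - x) ^ q + c * (x ^ q ^ 2 - x) = 0 ↔
      (x ^ q ^ 2 = x ∨ (x ^ q ^ 2 - x) ^ (q - 1) = -c)) := by
    intro c x hc
    constructor
    · intro h
      by_cases hy : x ^ q ^ 2 - x = 0
      · exact Or.inl (by linear_combination hy)
      · exact Or.inr (hcancel _ _ hy (by linear_combination h))
    · intro h
      rcases h with h | h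
      · have h0 : x ^ q ^ 2 - x = 0 := by linear_combination h
        rw [h0]
        simp [zero_pow (show q ≠ 0 by omega)]
      · rw [hexp _ _ h]; ring
  set e := a * b⁻¹ with hedef
  have he0 : e ≠ 0 := mul_ne_zero a0 (inv_ne_zero b0)
  set S : Set K := {x : K | (x ^ q ^ 2 - x) ^ (q - 1) = -a ∧ (x ^ q ^ 2 * x) ^ (q - 1) = e}
    with hSdef
  have hSfact : ∀ x ∈ S, x ≠ 0 ∧ x ^ q ^ 2 ≠ x := by
    intro x hx
    obtain ⟨h1, -⟩ := hx
    have hxF : x ^ q ^ 2 ≠ x := by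
      intro h
      have h0 : x ^ q ^ 2 - x = 0 := by linear_combination h
      rw [h0, zero_pow hq1'] at h1
      exact a0 (by linear_combination h1)
    refine ⟨?_, hxF⟩
    intro h0; apply hxF; rw [h0]
    exact zero_pow (by positivity)
  have hkey : ∀ x : K, x ≠ 0 → (x ^ q ^ 2 - x) ^ (q - 1) = -a →
      (((x⁻¹) ^ q ^ 2 - x⁻¹) ^ (q - 1) = -b ↔ (x ^ q ^ 2 * x) ^ (q - 1) = e) := by
    intro x hx0 hya
    have hxq0 : x ^ q ^ 2 ≠ 0 := pow_ne_zero _ hx0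
    have hs0 : x ^ q ^ 2 * x ≠ 0 := mul_ne_zero hxq0 hx0
    have hzz : (x⁻¹) ^ q ^ 2 - x⁻¹ = -((x ^ q ^ 2 - x) / (x ^ q ^ 2 * x)) := by
      rw [inv_pow]
      field_simp
      ring
    have hsp0 : (x ^ q ^ 2 * x) ^ (q - 1) ≠ 0 := pow_ne_zero _ hs0
    have hpows : ((x⁻¹) ^ q ^ 2 - x⁻¹) ^ (q - 1) = -a / (x ^ q ^ 2 * x) ^ (q - 1) := by
      rw [hzz, hev1.neg_pow, div_pow, hya]
    rw [hpows]
    constructor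
    · intro h
      rw [div_eq_iff hsp0] at h
      rw [hedef]
      have hsb : (x ^ q ^ 2 * x) ^ (q - 1) * b = a := by linear_combination h
      rw [← hsb, mul_assoc, mul_inv_cancel₀ b0, mul_one]
    · intro h
      rw [h, hedef, div_eq_iff (mul_ne_zero a0 (inv_ne_zero b0))]
      field_simp
  -- decomposition
  have hdecomp : (fun x => x⁻¹) ''
        ({x : K | x ^ q ^ 3 + a * x ^ q ^ 2 - x ^ q - a * x = 0} \ {0})
      ∩ {x : K | x ^ q ^ 3 + b * x ^ q ^ 2 - x ^ q - b * x = 0}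
      = ({x : K | x ^ q ^ 2 = x} \ {0}) ∪ ((fun x : K => x⁻¹) '' S) := by
    ext z
    simp only [Set.mem_inter_iff, Set.mem_image, Set.mem_diff, Set.mem_singleton_iff,
      Set.mem_union, Set.mem_setOf_eq, hSdef]
    constructor
    · rintro ⟨⟨x, ⟨hxA, hx0⟩, rfl⟩, hzB⟩
      by_cases hxF : x ^ q ^ 2 = x
      · left
        exact ⟨by rw [inv_pow, hxF], inv_ne_zero hx0⟩
      · right
        have hya : (x ^ q ^ 2 - x) ^ (q - 1) = -a := by
          have := (hroot a x a0).mp (by rw [← hexpr]; exact hxA)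
          tauto
        have hzF : (x⁻¹) ^ q ^ 2 ≠ x⁻¹ := by
          intro h
          apply hxF
          rw [← inv_inv x, inv_pow, h]
        have hzb : ((x⁻¹) ^ q ^ 2 - x⁻¹) ^ (q - 1) = -b := by
          have := (hroot b x⁻¹ b0).mp (by rw [← hexpr]; exact hzB)
          tauto
        exact ⟨x, ⟨hya, (hkey x hx0 hya).mp hzb⟩, rfl⟩
    · rintro (⟨hzF, hz0⟩ | ⟨x, hxS, rfl⟩)
      · refine ⟨⟨z⁻¹, ⟨?_, inv_ne_zero hz0⟩, inv_inv z⟩, ?_⟩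
        · rw [hexpr]
          exact (hroot a z⁻¹ a0).mpr (Or.inl (by rw [inv_pow, hzF]))
        · rw [hexpr]
          exact (hroot b z b0).mpr (Or.inl hzF)
      · obtain ⟨hx0, hxF⟩ := hSfact x hxS
        obtain ⟨hs1, hs2⟩ := hxS
        refine ⟨⟨x, ⟨?_, hx0⟩, rfl⟩, ?_⟩
        · rw [hexpr]; exact (hroot a x a0).mpr (Or.inr hs1)
        · rw [hexpr]
          exact (hroot b x⁻¹ b0).mpr (Or.inr ((hkey x hx0 hs1).mpr hs2))
  rw [Nat.card_coe_set_eq, hdecomp]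
  -- cardinality of F_{q^2}
  have hq20 : q ^ 2 ≠ 0 := by positivity
  have hFq2sep : (X ^ q ^ 2 - X : K[X]).Separable := by
    have hder : derivative (X ^ q ^ 2 - X : K[X]) = C (-1) := by
      simp only [derivative_sub, derivative_X_pow, derivative_X]
      rw [show ((q ^ 2 : ℕ) : K) = 0 by push_cast [hqK]; ring]
      simp
    rw [Polynomial.Separable, hder]
    exact ⟨0, C (-1)⁻¹, by rw [← C_mul, inv_mul_cancel₀ (by norm_num)]; simp⟩
  have hFq2ne : (X ^ q ^ 2 - X : K[X]) ≠ 0 := by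
    intro h
    have h' := congrArg natDegree (sub_eq_zero.mp h)
    rw [natDegree_X_pow, natDegree_X] at h'
    nlinarith
  have hFq2fin : {x : K | x ^ q ^ 2 = x}.Finite := by
    have hset : {x : K | x ^ q ^ 2 = x} = {x : K | (X ^ q ^ 2 - X : K[X]).eval x = 0} := by
      ext x; simp [sub_eq_zero]
    rw [hset]
    exact (X ^ q ^ 2 - X : K[X]).finite_setOf_isRoot hFq2ne
  have hFq2deg : (X ^ q ^ 2 - X : K[X]).natDegree = q ^ 2 := by
    compute_degree!
    all_goals try nlinarith
    all_goals rw [if_neg (show ¬ 1 = q ^ 2 by nlinarith)]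
    all_goals norm_num
  have hFq2card : {x : K | x ^ q ^ 2 = x}.ncard = q ^ 2 := by
    have hc := card_setOf_root _ hFq2sep hFq2ne
    rw [hFq2deg] at hc
    have hset : {x : K | x ^ q ^ 2 = x} = {x : K | (X ^ q ^ 2 - X : K[X]).eval x = 0} := by
      ext x; simp [sub_eq_zero]
    rw [hset, ← Nat.card_coe_set_eq, hc]
  -- cardinality of Y
  have hYc := card_setOf_pow_eq (K := K) (q - 1) (-a)
    (by rw [Nat.cast_sub (by omega : 1 ≤ q), hqK, Nat.cast_one]; simp)
    (neg_ne_zero.mpr a0)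
  have hYcard : {y : K | y ^ (q - 1) = -a}.ncard = q - 1 := hYc.1
  have hYfin : {y : K | y ^ (q - 1) = -a}.Finite := hYc.2
  -- T and the bijection with S
  set T : Set (K × K) := {p : K × K | p.1 ^ (q - 1) = -a ∧ p.2 ^ q ^ 2 = p.2 ∧
    (p.2 ^ 2 - p.1 ^ 2) ^ (q - 1) = e} with hTdef
  have h2q : (2 : K) ^ q = 2 := by
    have h := hfrob 1 1
    norm_num at h
    exact h
  have h2q2 : (2 : K) ^ q ^ 2 = 2 := by rw [hpows2, h2q, h2q]
  have h40 : (4 : K) ≠ 0 := by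
    intro h
    have h4 : (2 : K) * 2 = 4 := by norm_num
    rw [h] at h4
    rcases mul_eq_zero.mp h4 with h' | h' <;> exact h2 h'
  have h4q : (4 : K) ^ (q - 1) = 1 := by
    apply hcancel _ _ h40
    rw [one_mul]
    calc (4 : K) ^ q = ((2 : K) ^ 2) ^ q := by norm_num
      _ = ((2 : K) ^ q) ^ 2 := pow_right_comm 2 2 q
      _ = 4 := by rw [h2q]; norm_num
  have hphi_im : (fun x : K => (x ^ q ^ 2 - x, x ^ q ^ 2 + x)) '' S = T := by
    ext p
    obtain ⟨y, r⟩ := p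
    simp only [Set.mem_image, hTdef, Set.mem_setOf_eq, hSdef, Prod.mk.injEq]
    constructor
    · rintro ⟨x, ⟨h1, hs2⟩, hfst, hsnd⟩
      obtain ⟨hy0, hyq, hyq2⟩ := hyfact _ h1
      subst hfst
      subst hsnd
      refine ⟨h1, ?_, ?_⟩
      · have hxq2q2 : (x ^ q ^ 2) ^ q ^ 2 = x := by
          calc (x ^ q ^ 2) ^ q ^ 2 = (x + (x ^ q ^ 2 - x)) ^ q ^ 2 := by ring_nf
            _ = x ^ q ^ 2 + (x ^ q ^ 2 - x) ^ q ^ 2 := hadd2 _ _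
            _ = x ^ q ^ 2 + (-(x ^ q ^ 2 - x)) := by rw [hyq2]
            _ = x := by ring
        rw [hadd2, hxq2q2]
        ring
      · have hsq : (x ^ q ^ 2 + x) ^ 2 - (x ^ q ^ 2 - x) ^ 2 = 4 * (x ^ q ^ 2 * x) := by
          ring
        rw [hsq, mul_pow, h4q, one_mul, hs2]
    · rintro ⟨hyY, hrF, hre⟩
      obtain ⟨hy0, hyq, hyq2⟩ := hyfact _ hyY
      have hx2 : ((r - y) / 2) ^ q ^ 2 = (r + y) / 2 := by
        rw [div_pow, hsub2, hrF, hyq2, h2q2]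
        ring
      have hc1 : ((r - y) / 2) ^ q ^ 2 - (r - y) / 2 = y := by
        rw [hx2]; field_simp [h2]; ring
      have hc2 : ((r - y) / 2) ^ q ^ 2 * ((r - y) / 2) = (r ^ 2 - y ^ 2) / 4 := by
        rw [hx2]; field_simp [h2, h40]; ring
      refine ⟨(r - y) / 2, ⟨?_, ?_⟩, ?_, ?_⟩
      · rw [hc1]; exact hyY
      · rw [hc2, div_pow, hre, h4q, div_one]
      · rw [hc1]
      · rw [hx2]; field_simp [h2]; ring
  have hφinj : Set.InjOn (fun x : K => (x ^ q ^ 2 - x, x ^ q ^ 2 + x)) S := by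
    intro x1 hx1 x2 hx2 heq'
    have e1 : x1 ^ q ^ 2 - x1 = x2 ^ q ^ 2 - x2 := congrArg Prod.fst heq'
    have e2 : x1 ^ q ^ 2 + x1 = x2 ^ q ^ 2 + x2 := congrArg Prod.snd heq'
    have h2x : (2 : K) * x1 = 2 * x2 := by linear_combination e2 - e1
    exact mul_left_cancel₀ h2 h2x
  have hST : S.ncard = T.ncard := by rw [← hphi_im, Set.ncard_image_of_injOn hφinj]
  -- count T fiberwise
  have hTsub : T ⊆ {y : K | y ^ (q - 1) = -a} ×ˢ {x : K | x ^ q ^ 2 = x} := by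
    rintro ⟨y, r⟩ ⟨h1', h2', -⟩
    exact ⟨h1', h2'⟩
  have hTfin : T.Finite := (hYfin.prod hFq2fin).subset hTsub
  have hslice : ∀ y : K, y ^ (q - 1) = -a →
      {r : K | r ^ q ^ 2 = r ∧ (r ^ 2 - y ^ 2) ^ (q - 1) = e}.ncard = q + 1 := by
    intro y hy
    rw [hedef]
    exact slice_count K q hq3 hoddq hqK hfrob h2 a b ha hb hab2 hab y hy
  have hslicefin : ∀ y : K,
      {r : K | r ^ q ^ 2 = r ∧ (r ^ 2 - y ^ 2) ^ (q - 1) = e}.Finite := fun y =>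
    hFq2fin.subset fun r hr => hr.1
  have hTcard : T.ncard = (q - 1) * (q + 1) := by
    have hmapsto : ∀ p ∈ hTfin.toFinset, p.1 ∈ hYfin.toFinset := by
      rintro ⟨y, r⟩ hp
      rw [Set.Finite.mem_toFinset] at hp ⊢
      exact hp.1
    have hfib : ∀ y ∈ hYfin.toFinset,
        (hTfin.toFinset.filter (fun p => p.1 = y)).card = q + 1 := by
      intro y hy
      rw [Set.Finite.mem_toFinset] at hy
      have hfeq : hTfin.toFinset.filter (fun p => p.1 = y)
          = (hslicefin y).toFinset.image (fun r => (y, r)) := by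
        ext p
        obtain ⟨y', r⟩ := p
        simp only [Finset.mem_filter, Set.Finite.mem_toFinset, Finset.mem_image,
          hTdef, Set.mem_setOf_eq, Prod.mk.injEq]
        constructor
        · rintro ⟨⟨h1', h2', h3'⟩, rfl⟩
          exact ⟨r, ⟨h2', h3'⟩, rfl, rfl⟩
        · rintro ⟨r', ⟨hr1, hr2⟩, rfl, rfl⟩
          exact ⟨⟨hy, hr1, hr2⟩, rfl⟩
      rw [hfeq, Finset.card_image_of_injective _ (fun r1 r2 h => by simpa using h),
        ← Set.ncard_eq_toFinset_card _ (hslicefin y)]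
      exact hslice y hy
    have hcard := Finset.card_eq_sum_card_fiberwise hmapsto
    rw [Set.ncard_eq_toFinset_card T hTfin, hcard, Finset.sum_congr rfl hfib,
      Finset.sum_const, smul_eq_mul, ← Set.ncard_eq_toFinset_card _ hYfin, hYcard]
  -- assemble
  have hdisj : Disjoint ({x : K | x ^ q ^ 2 = x} \ {0}) ((fun x : K => x⁻¹) '' S) := by
    rw [Set.disjoint_left]
    rintro z ⟨hzF, hz0⟩ ⟨x, hxS, rfl⟩
    obtain ⟨hx0, hxF⟩ := hSfact x hxS
    apply hxF
    rw [← inv_inv x, inv_pow, hzF]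
  have hSfin : S.Finite :=
    Set.Finite.of_finite_image (by rw [hphi_im]; exact hTfin) hφinj
  have himgfin : ((fun x : K => x⁻¹) '' S).Finite := hSfin.image _
  have hfin1 : ({x : K | x ^ q ^ 2 = x} \ {0}).Finite := hFq2fin.diff
  rw [Set.ncard_union_eq hdisj hfin1 himgfin]
  have h0mem : (0 : K) ∈ {x : K | x ^ q ^ 2 = x} := by
    simp [zero_pow hq20]
  have hc1 : ({x : K | x ^ q ^ 2 = x} \ {0}).ncard = q ^ 2 - 1 := by
    rw [Set.ncard_diff_singleton_of_mem h0mem, hFq2card]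
  have hc2 : ((fun x : K => x⁻¹) '' S).ncard = (q - 1) * (q + 1) := by
    rw [Set.ncard_image_of_injective S inv_injective, hST, hTcard]
  rw [hc1, hc2]
  have hnat1 : (q - 1) * (q + 1) = q ^ 2 - 1 := by
    have h1 : (q - 1) * (q + 1) = q * (q + 1) - (q + 1) := by rw [Nat.sub_mul, one_mul]
    have h2' : q * (q + 1) = q ^ 2 + q := by ring
    rw [h1, h2']
    generalize q ^ 2 = Q
    omega
  rw [hnat1]
  have h1q2 : 1 ≤ q ^ 2 := Nat.one_le_pow _ _ (by omega)
  generalize hQ : q ^ 2 = Q at *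
  omega

theorem stmt9 (F : Type*) [Field F] [Fintype F]
    (K : Type*) [Field K] [Algebra F K] [IsAlgClosure F K]
    (q : ℕ) (hq : Fintype.card F = q) (hqodd : Odd q)
    (a b : K) (ha : a ^ (q + 1) = -1) (hb : b ^ (q + 1) = -1)
    (hab2 : a ^ ((q + 1) / 2) ≠ b ^ ((q + 1) / 2)) (hab : a * b ≠ 1)
    (A B : Set K)
    (hA : A = {x : K | x ^ q ^ 3 + a * x ^ q ^ 2 - x ^ q - a * x = 0})
    (hB : B = {x : K | x ^ q ^ 3 + b * x ^ q ^ 2 - x ^ q - b * x = 0}) :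
    (∃ V : Submodule F K, (V : Set K) = A) ∧ (∃ W : Submodule F K, (W : Set K) = B) ∧
    Nat.card A = q ^ 3 ∧ Nat.card B = q ^ 3 ∧
    Nat.card ((fun x => x⁻¹) '' (A \ {0}) ∩ B : Set K) = 2 * q ^ 2 - 2 := by
  haveI : IsAlgClosed K := IsAlgClosure.isAlgClosed F
  subst hA hB
  -- basic arithmetic facts
  have hq2 : 1 < q := hq ▸ Fintype.one_lt_card
  have hq3 : 3 ≤ q := by
    obtain ⟨l, hl⟩ := hqodd
    omega
  set p := ringChar F with hp
  haveI : CharP F p := ringChar.charP F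
  obtain ⟨n, hpprime, hqpn⟩ := FiniteField.card F p
  haveI : Fact p.Prime := ⟨hpprime⟩
  haveI : CharP K p := charP_of_injective_ringHom (algebraMap F K).injective p
  rw [hq] at hqpn
  have hqK : (q : K) = 0 := by
    rw [hqpn]
    push_cast
    rw [CharP.cast_eq_zero K p]
    exact zero_pow (by exact_mod_cast n.ne_zero)
  have hfrob : ∀ x y : K, (x + y) ^ q = x ^ q + y ^ q := by
    intro x y
    rw [hqpn]
    exact add_pow_char_pow x y p n
  have h2 : (2 : K) ≠ 0 := by
    intro h20
    have hpd : p ∣ 2 := by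
      have := (CharP.cast_eq_zero_iff K p 2).mp (by exact_mod_cast h20)
      exact this
    have hp2 : p = 2 := (Nat.prime_dvd_prime_iff_eq hpprime Nat.prime_two).mp hpd
    have h2q : 2 ∣ q := by
      rw [hqpn, ← hp2]
      exact dvd_pow_self p (by exact_mod_cast n.ne_zero)
    obtain ⟨k, hk⟩ := h2q
    obtain ⟨l, hl⟩ := hqodd
    omega
  have a0 : a ≠ 0 := by
    intro h; rw [h, zero_pow (by omega : q + 1 ≠ 0)] at ha
    exact one_ne_zero (by linear_combination ha)
  have b0 : b ≠ 0 := by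
    intro h; rw [h, zero_pow (by omega : q + 1 ≠ 0)] at hb
    exact one_ne_zero (by linear_combination hb)
  -- the subspaces
  have hpows2 : ∀ x : K, x ^ q ^ 2 = (x ^ q) ^ q := by
    intro x; rw [← pow_mul, sq]
  have hpows3 : ∀ x : K, x ^ q ^ 3 = (x ^ q ^ 2) ^ q := by
    intro x; rw [← pow_mul, pow_succ]
  have hadd2 : ∀ x y : K, (x + y) ^ q ^ 2 = x ^ q ^ 2 + y ^ q ^ 2 := by
    intro x y
    rw [hpows2, hfrob, hfrob, ← hpows2, ← hpows2]
  have hadd3 : ∀ x y : K, (x + y) ^ q ^ 3 = x ^ q ^ 3 + y ^ q ^ 3 := by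
    intro x y
    rw [hpows3, hadd2, hfrob, ← hpows3, ← hpows3]
  have halg : ∀ m : F, (algebraMap F K m) ^ q = algebraMap F K m := by
    intro m
    rw [← map_pow]
    congr 1
    rw [← hq]
    exact FiniteField.pow_card m
  have halg2 : ∀ m : F, (algebraMap F K m) ^ q ^ 2 = algebraMap F K m := by
    intro m; rw [hpows2, halg, halg]
  have halg3 : ∀ m : F, (algebraMap F K m) ^ q ^ 3 = algebraMap F K m := by
    intro m; rw [hpows3, halg2, halg]
  have mkV : ∀ c : K, ∃ V : Submodule F K,
      (V : Set K) = {x : K | x ^ q ^ 3 + c * x ^ q ^ 2 - x ^ q - c * x = 0} := by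
    intro c
    let f : K →ₗ[F] K :=
      { toFun := fun x => x ^ q ^ 3 + c * x ^ q ^ 2 - x ^ q - c * x
        map_add' := by
          intro x y
          rw [hadd3, hadd2, hfrob]
          ring
        map_smul' := by
          intro m x
          simp only [RingHom.id_apply]
          rw [Algebra.smul_def, Algebra.smul_def, mul_pow, mul_pow, mul_pow,
            halg, halg2, halg3]
          ring }
    refine ⟨LinearMap.ker f, ?_⟩
    ext x
    simp only [SetLike.mem_coe, LinearMap.mem_ker, Set.mem_setOf_eq, f,
      LinearMap.coe_mk, AddHom.coe_mk]
  refine ⟨mkV a, mkV b, ?_, ?_, ?_⟩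
  · exact cardA_aux K q hq3 hqK a a0
  · exact cardA_aux K q hq3 hqK b b0
  · exact inter_count K q hq3 hqodd hqK hfrob h2 a b ha hb hab2 hab
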